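/- Let L|K be a finite separable extension of difference fields. Then L is σ-radicial over its strong core π₀^σ(L|K): for every a ∈ L there exists n ∈ ℕ with σⁿ(a) ∈ π₀^σ(L|K). Moreover, there exists n ∈ ℕ such that the intermediate field K(σⁿ(L)) is σ-separable over K and contained in π₀^σ(L|K). -/

import Mathlib

open TensorProduct

/-- The diagonal endomorphism `σ(a ⊗ b) = σ(a) ⊗ σ(b)` of `A ⊗_k B` is injective
(i.e. `A ⊗_k B` is σ-reduced): any ring endomorphism satisfying the defining rule
on pure tensors is injective. -/
def SigmaReducedTensor (k A B : Type) [CommRing k] [CommRing A] [CommRing B]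
    [Algebra k A] [Algebra k B] (σA : A →+* A) (σB : B →+* B) : Prop :=
  ∀ τ : (A ⊗[k] B) →+* A ⊗[k] B,
    (∀ (a : A) (b : B), τ (a ⊗ₜ[k] b) = σA a ⊗ₜ[k] σB b) → Function.Injective τ

/-- A `k`-σ-algebra `R` is σ-separable over `k` if `R ⊗_k K` is σ-reduced for
every difference field extension `K` of `k`. -/
def IsSigmaSeparable (k R : Type) [Field k] [CommRing R] [Algebra k R]
    (σk : k →+* k) (σR : R →+* R) : Prop :=
  ∀ (K : Type) [Field K] [Algebra k K], ∀ σK : K →+* K,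
    (∀ x : k, σK (algebraMap k K x) = algebraMap k K (σk x)) →
    SigmaReducedTensor k K R σK σR

/-- The strong core `π₀^σ(L|K)` of a difference field extension: the union of all
intermediate σ-fields that are finite separable and σ-separable over `K`. -/
def strongCoreSet (K L : Type) [Field K] [Field L] [Algebra K L]
    (σK : K →+* K) (σL : L →+* L) : Set L :=
  {a : L | ∃ M : IntermediateField K L, a ∈ M ∧ ∃ h : ∀ x ∈ M, σL x ∈ M,
    FiniteDimensional K ↥M ∧ Algebra.IsSeparable K ↥M ∧
      IsSigmaSeparable K ↥M σK (σL.restrict M M h)}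

/-- Key abstract lemma: if `M|K` is a finite field extension with semilinear
endomorphism `σM` whose range `K`-spans `M`, then `M` is σ-separable over `K`. -/
lemma sigmaSep_of_span (K M : Type) [Field K] [Field M] [Algebra K M]
    [FiniteDimensional K M] (σK : K →+* K) (σM : M →+* M)
    (hcomp : ∀ x : K, σM (algebraMap K M x) = algebraMap K M (σK x))
    (hspan : Submodule.span K (Set.range σM) = (⊤ : Submodule K M)) :
    IsSigmaSeparable K M σK σM := by
  intro K' _ _ σK' hσK' τ hτ
  classical
  -- semilinearity of σM over K
  have hsemi : ∀ (c : K) (x : M), σM (c • x) = σK c • σM x := by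
    intro c x
    rw [Algebra.smul_def, map_mul, hcomp, ← Algebra.smul_def]
  let b : Module.Basis (Fin (Module.finrank K M)) K M := Module.finBasis K M
  let bR : Module.Basis (Fin (Module.finrank K M)) K' (K' ⊗[K] M) := b.baseChange K'
  let w : Fin (Module.finrank K M) → K' ⊗[K] M := fun i => (1 : K') ⊗ₜ[K] σM (b i)
  -- every `1 ⊗ m` lies in the K'-span of w
  have hmem : ∀ m : M, ((1 : K') ⊗ₜ[K] m) ∈ Submodule.span K' (Set.range w) := by
    intro m
    have hm : m ∈ Submodule.span K (Set.range σM) := hspan ▸ Submodule.mem_top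
    induction hm using Submodule.span_induction with
    | mem x hx =>
      obtain ⟨m', rfl⟩ := hx
      have hrep : σM m' = ∑ i, σK (b.repr m' i) • σM (b i) := by
        conv_lhs => rw [← b.sum_repr m']
        rw [map_sum]
        exact Finset.sum_congr rfl fun i _ => hsemi _ _
      rw [hrep, TensorProduct.tmul_sum]
      refine Submodule.sum_mem _ fun i _ => ?_
      rw [TensorProduct.tmul_smul, ← algebraMap_smul K' (σK (b.repr m' i))]
      exact Submodule.smul_mem _ _ (Submodule.subset_span ⟨i, rfl⟩)
    | zero => rw [TensorProduct.tmul_zero]; exact Submodule.zero_mem _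
    | add x y hx hy ihx ihy =>
      rw [TensorProduct.tmul_add]; exact Submodule.add_mem _ ihx ihy
    | smul c x hx ihx =>
      rw [TensorProduct.tmul_smul, ← algebraMap_smul K' c]
      exact Submodule.smul_mem _ _ ihx
  -- the w span everything
  have htop : ⊤ ≤ Submodule.span K' (Set.range w) := by
    intro v _
    rw [← bR.sum_repr v]
    refine Submodule.sum_mem _ fun i _ => ?_
    refine Submodule.smul_mem _ _ ?_
    have : bR i = (1 : K') ⊗ₜ[K] b i := b.baseChange_apply K' i
    rw [this]
    exact hmem (b i)
  -- hence linearly independent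
  have hw : LinearIndependent K' w := by
    refine linearIndependent_of_top_le_span_of_card_eq_finrank htop ?_
    rw [Module.finrank_eq_card_basis bR, Fintype.card_fin]
  -- injectivity
  rw [injective_iff_map_eq_zero]
  intro v hv
  have hv' : v = ∑ i, bR.repr v i • bR i := (bR.sum_repr v).symm
  have hτv : τ v = ∑ i, σK' (bR.repr v i) • w i := by
    conv_lhs => rw [hv']
    rw [map_sum]
    refine Finset.sum_congr rfl fun i _ => ?_
    have h1 : bR.repr v i • bR i = (bR.repr v i) ⊗ₜ[K] b i := by
      rw [b.baseChange_apply K' i, TensorProduct.smul_tmul', smul_eq_mul, mul_one]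
    rw [h1, hτ, TensorProduct.smul_tmul', smul_eq_mul, mul_one]
  rw [hτv] at hv
  have hall : ∀ i, σK' (bR.repr v i) = 0 := by
    have := Fintype.linearIndependent_iff.mp hw (fun i => σK' (bR.repr v i)) hv
    exact this
  have hzero : ∀ i, bR.repr v i = 0 := fun i =>
    σK'.injective (by rw [hall i, map_zero])
  rw [hv']
  simp [hzero]

/-- A finite separable extension of difference fields `L|K` is σ-radicial over its
strong core; moreover some `K(σⁿ(L))` is σ-separable over `K` and contained in the
strong core. -/
theorem strongly_etale_stmt16
    (K L : Type) [Field K] [Field L] [Algebra K L]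
    [FiniteDimensional K L] [Algebra.IsSeparable K L]
    (σK : K →+* K) (σL : L →+* L)
    (hcomp : ∀ x : K, σL (algebraMap K L x) = algebraMap K L (σK x)) :
    (∀ a : L, ∃ n : ℕ, σL^[n] a ∈ strongCoreSet K L σK σL) ∧
      ∃ n : ℕ, ∃ hst : ∀ x ∈ IntermediateField.adjoin K (Set.range (σL^[n])),
          σL x ∈ IntermediateField.adjoin K (Set.range (σL^[n])),
        IsSigmaSeparable K ↥(IntermediateField.adjoin K (Set.range (σL^[n]))) σK
            (σL.restrict _ _ hst) ∧
          (IntermediateField.adjoin K (Set.range (σL^[n])) : Set L)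
            ⊆ strongCoreSet K L σK σL := by
  classical
  have halg : ∀ x : L, IsAlgebraic K x := fun x =>
    (Algebra.IsAlgebraic.of_finite K L).isAlgebraic x
  let Sn : ℕ → IntermediateField K L := fun n =>
    IntermediateField.adjoin K (Set.range (σL^[n]))
  have hA : ∀ m, (Sn m).toSubalgebra = Algebra.adjoin K (Set.range (σL^[m])) :=
    fun m => IntermediateField.adjoin_toSubalgebra_of_isAlgebraic (fun x _ => halg x)
  have hmemA : ∀ m (x : L), x ∈ Sn m ↔ x ∈ Algebra.adjoin K (Set.range (σL^[m])) := by
    intro m x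
    rw [← hA m]
    exact Iff.rfl
  have hsub : ∀ n, Set.range (σL^[n+1]) ⊆ Set.range (σL^[n]) := by
    rintro n x ⟨a, rfl⟩
    exact ⟨σL a, (Function.iterate_succ_apply σL n a).symm⟩
  have hmono : ∀ n, Sn (n + 1) ≤ Sn n := fun n =>
    IntermediateField.adjoin.mono K _ _ (hsub n)
  -- stabilization
  have hex : ∃ n, Sn (n + 1) = Sn n := by
    by_contra hcon
    push_neg at hcon
    set f : ℕ → ℕ := fun n =>
      Module.finrank K ↥(Subalgebra.toSubmodule (Sn n).toSubalgebra) with hf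
    have hlt : ∀ n, f (n + 1) < f n := by
      intro n
      refine Submodule.finrank_lt_finrank_of_lt ?_
      refine lt_of_le_of_ne ?_ ?_
      · intro x hx
        exact hmono n hx
      · intro heq
        apply hcon n
        apply IntermediateField.toSubalgebra_injective
        apply (Subalgebra.toSubmodule).injective  -- might need adjusting
        exact heq
    have hdesc : ∀ n, f n + n ≤ f 0 := by
      intro n
      induction n with
      | zero => omega
      | succ k ih => have := hlt k; omega
    have := hdesc (f 0 + 1)
    omega
  obtain ⟨n, heq⟩ := hex
  have hst : ∀ x ∈ Sn n, σL x ∈ Sn n := by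
    intro x hx
    rw [← heq, hmemA (n + 1)]
    have hx' : x ∈ Algebra.adjoin K (Set.range (σL^[n])) := (hmemA n x).mp hx
    clear hx
    induction hx' using Algebra.adjoin_induction with
    | mem y hy =>
      obtain ⟨a, rfl⟩ := hy
      rw [← Function.iterate_succ_apply' σL n a]
      exact Algebra.subset_adjoin ⟨a, rfl⟩
    | algebraMap r => rw [hcomp]; exact Subalgebra.algebraMap_mem _ _
    | add x y hx hy ihx ihy => rw [map_add]; exact add_mem ihx ihy
    | mul x y hx hy ihx ihy => rw [map_mul]; exact mul_mem ihx ihy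
  -- the restricted endomorphism
  set σM : ↥(Sn n) →+* ↥(Sn n) := σL.restrict (Sn n) (Sn n) hst with hσM
  -- its range generates everything as a K-algebra
  have hadjM : Algebra.adjoin K (Set.range σM) = (⊤ : Subalgebra K ↥(Sn n)) := by
    rw [eq_top_iff]
    intro y _
    set B : Subalgebra K ↥(Sn n) := Algebra.adjoin K (Set.range σM) with hB
    have h1 : Set.range (σL^[n+1]) ⊆ (B.map (Sn n).val : Set L) := by
      rintro _ ⟨a, rfl⟩
      have hmem : σL^[n] a ∈ Sn n := IntermediateField.subset_adjoin K _ ⟨a, rfl⟩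
      refine ⟨σM ⟨σL^[n] a, hmem⟩, Algebra.subset_adjoin ⟨_, rfl⟩, ?_⟩
      show σL (σL^[n] a) = σL^[n+1] a
      exact (Function.iterate_succ_apply' σL n a).symm
    have h2 : Algebra.adjoin K (Set.range (σL^[n+1])) ≤ B.map (Sn n).val :=
      Algebra.adjoin_le h1
    have h3 : (y : L) ∈ Algebra.adjoin K (Set.range (σL^[n+1])) := by
      rw [← hmemA (n + 1), heq]
      exact y.2
    obtain ⟨z, hz, hzy⟩ := h2 h3
    have : z = y := Subtype.ext hzy
    rwa [← this]
  -- hence its range K-spans everything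
  have hspanM : Submodule.span K (Set.range σM) = (⊤ : Submodule K ↥(Sn n)) := by
    refine le_antisymm le_top ?_
    have hcl : (Submonoid.closure (Set.range σM) : Set ↥(Sn n)) ⊆ Set.range σM := by
      intro x hx
      induction hx using Submonoid.closure_induction with
      | mem y hy => exact hy
      | one => exact ⟨1, map_one σM⟩
      | mul a b ha hb iha ihb =>
        obtain ⟨a', rfl⟩ := iha
        obtain ⟨b', rfl⟩ := ihb
        exact ⟨a' * b', map_mul σM a' b'⟩
    calc (⊤ : Submodule K ↥(Sn n))
        = Subalgebra.toSubmodule (⊤ : Subalgebra K ↥(Sn n)) := by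
          rw [Algebra.top_toSubmodule]
      _ = Subalgebra.toSubmodule (Algebra.adjoin K (Set.range σM)) := by rw [hadjM]
      _ = Submodule.span K (Submonoid.closure (Set.range σM)) := Algebra.adjoin_eq_span K _
      _ ≤ Submodule.span K (Set.range σM) := Submodule.span_mono hcl
  have hcompM : ∀ x : K, σM (algebraMap K ↥(Sn n) x) = algebraMap K ↥(Sn n) (σK x) := by
    intro x
    apply Subtype.ext
    show σL ((algebraMap K ↥(Sn n) x : L)) = (algebraMap K ↥(Sn n) (σK x) : L)
    have e1 : ((algebraMap K ↥(Sn n) x : L)) = algebraMap K L x := rfl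
    have e2 : ((algebraMap K ↥(Sn n) (σK x) : L)) = algebraMap K L (σK x) := rfl
    rw [e1, e2, hcomp]
  have hsig : IsSigmaSeparable K ↥(Sn n) σK σM :=
    sigmaSep_of_span K ↥(Sn n) σK σM hcompM hspanM
  have hsep : Algebra.IsSeparable K ↥(Sn n) :=
    Algebra.isSeparable_tower_bot_of_isSeparable K ↥(Sn n) L
  have hcore : (Sn n : Set L) ⊆ strongCoreSet K L σK σL := by
    intro a ha
    exact ⟨Sn n, ha, hst, inferInstance, hsep, hsig⟩
  refine ⟨fun a => ⟨n, hcore (IntermediateField.subset_adjoin K _ ⟨a, rfl⟩)⟩,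
    n, hst, hsig, hcore⟩
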